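/- Let K be a field, and let g₁, g₂ ∈ K[x] be monic cubics with roots α₁, α₂, α₃ and β₁, β₂, β₃ respectively (in an algebraic closure). Define A = α₁α₂(β₁-β₂) + α₃α₁(β₃-β₁) + α₂α₃(β₂-β₃), B = α₁α₂β₃(β₂-β₁) + α₃α₁β₂(β₁-β₃) + α₂α₃β₁(β₃-β₂), C = β₁(α₂-α₃) + β₂(α₃-α₁) + β₃(α₁-α₂), D = β₁β₂(α₁-α₂) + β₂β₃(α₂-α₃) + β₃β₁(α₃-α₁). Assume A - Cαᵢ ≠ 0 for i = 1, 2, 3 and AD - BC ≠ 0. Then for all x with A - Cx ≠ 0, g₂((Dx - B)/(A - Cx)) = (AD - BC)³ / ((A - Cx)³ · (A - Cα₁)(A - Cα₂)(A - Cα₃)) · g₁(x). -/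

import Mathlib

theorem stmt16 {K : Type*} [Field K] (α₁ α₂ α₃ β₁ β₂ β₃ : K)
    (A B C D : K)
    (hA : A = α₁*α₂*(β₁-β₂) + α₃*α₁*(β₃-β₁) + α₂*α₃*(β₂-β₃))
    (hB : B = α₁*α₂*β₃*(β₂-β₁) + α₃*α₁*β₂*(β₁-β₃) + α₂*α₃*β₁*(β₃-β₂))
    (hC : C = β₁*(α₂-α₃) + β₂*(α₃-α₁) + β₃*(α₁-α₂))
    (hD : D = β₁*β₂*(α₁-α₂) + β₂*β₃*(α₂-α₃) + β₃*β₁*(α₃-α₁))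
    (hα1 : A - C*α₁ ≠ 0) (hα2 : A - C*α₂ ≠ 0) (hα3 : A - C*α₃ ≠ 0)
    (hdet : A*D - B*C ≠ 0) (x : K) (hx : A - C*x ≠ 0) :
    ((D*x - B)/(A - C*x) - β₁) * ((D*x - B)/(A - C*x) - β₂) * ((D*x - B)/(A - C*x) - β₃)
      = (A*D - B*C)^3 / ((A - C*x)^3 * ((A - C*α₁)*(A - C*α₂)*(A - C*α₃)))
        * ((x - α₁)*(x - α₂)*(x - α₃)) := by
  have k1 : ((D*x - B) - β₁*(A - C*x)) * (A - C*α₁) = (A*D - B*C)*(x - α₁) := by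
    subst hA hB hC hD; ring
  have k2 : ((D*x - B) - β₂*(A - C*x)) * (A - C*α₂) = (A*D - B*C)*(x - α₂) := by
    subst hA hB hC hD; ring
  have k3 : ((D*x - B) - β₃*(A - C*x)) * (A - C*α₃) = (A*D - B*C)*(x - α₃) := by
    subst hA hB hC hD; ring
  have e1 : (D*x - B)/(A - C*x) - β₁ = (A*D - B*C)*(x - α₁)/((A - C*x)*(A - C*α₁)) := by
    rw [← k1, mul_div_mul_right _ _ hα1, eq_div_iff hx, sub_mul, div_mul_cancel₀ _ hx]
  have e2 : (D*x - B)/(A - C*x) - β₂ = (A*D - B*C)*(x - α₂)/((A - C*x)*(A - C*α₂)) := by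
    rw [← k2, mul_div_mul_right _ _ hα2, eq_div_iff hx, sub_mul, div_mul_cancel₀ _ hx]
  have e3 : (D*x - B)/(A - C*x) - β₃ = (A*D - B*C)*(x - α₃)/((A - C*x)*(A - C*α₃)) := by
    rw [← k3, mul_div_mul_right _ _ hα3, eq_div_iff hx, sub_mul, div_mul_cancel₀ _ hx]
  rw [e1, e2, e3]; field_simp
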